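/- Let H₀ be a Hilbert space, H ⊆ H₀ a closed subspace with orthogonal projection P, and for n ∈ ℕ closed subspaces H_n ⊆ H₀ with projections P_n → P strongly. Let T_n(λ) = Σ_{j=0}^M λ^j A_{j,n} be polynomial operator pencils with A_{0,n} closed and A_{j,n} (j ≥ 1) bounded uniformly in n. If λ belongs to the region of boundedness Δ_b((T_n)), i.e. T_n(λ)^{−1} exist for n ≥ n₀ with sup norms bounded by m, then there is r > 0 such that the whole disk B_r(λ) lies in Δ_b((T_n)) with a uniform bound on ‖T_n(μ)^{−1}‖ for μ ∈ B_r(λ), n ≥ n₀. -/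

import Mathlib

open Filter

lemma geom_inv {E : Type*} [NormedAddCommGroup E] [NormedSpace ℂ E] [CompleteSpace E]
    (t : E →L[ℂ] E) (ht : ‖t‖ ≤ 1/2) :
    ∃ S : E →L[ℂ] E, (1 - t) * S = 1 ∧ S * (1 - t) = 1 ∧ ‖S‖ ≤ 2 := by
  have h1 : ‖t‖ < 1 := lt_of_le_of_lt ht (by norm_num)
  refine ⟨∑' n : ℕ, t ^ n, mul_neg_geom_series t h1, geom_series_mul_neg t h1, ?_⟩
  have hb : ∀ n : ℕ, ‖t ^ n‖ ≤ ‖t‖ ^ n := by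
    intro n
    cases n with
    | zero => simpa using (show ‖(1 : E →L[ℂ] E)‖ ≤ 1 from ContinuousLinearMap.norm_id_le)
    | succ k => exact norm_pow_le' t k.succ_pos
  have h2 : ‖∑' n : ℕ, t ^ n‖ ≤ (1 - ‖t‖)⁻¹ :=
    tsum_of_norm_bounded (hasSum_geometric_of_lt_one (norm_nonneg t) h1) hb
  have h3 : (1 - ‖t‖)⁻¹ ≤ 2 := by
    rw [inv_le_iff_one_le_mul₀ (by linarith)]
    nlinarith [norm_nonneg t]
  linarith

lemma pow_sub_pow_bound (μ l : ℂ) (k : ℕ) (h : ‖μ - l‖ ≤ 1) :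
    ‖μ ^ k - l ^ k‖ ≤ (k : ℝ) * (‖l‖ + 1) ^ k * ‖μ - l‖ := by
  rw [← geom_sum₂_mul μ l k, norm_mul]
  have hμ : ‖μ‖ ≤ ‖l‖ + 1 := by
    calc ‖μ‖ = ‖l + (μ - l)‖ := by ring_nf
    _ ≤ ‖l‖ + ‖μ - l‖ := norm_add_le _ _
    _ ≤ ‖l‖ + 1 := by linarith
  have hl : ‖l‖ ≤ ‖l‖ + 1 := by linarith
  have hb1 : (1 : ℝ) ≤ ‖l‖ + 1 := by linarith [norm_nonneg l]
  have hs : ‖∑ i ∈ Finset.range k, μ ^ i * l ^ (k - 1 - i)‖ ≤ (k : ℝ) * (‖l‖ + 1) ^ k := by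
    calc ‖∑ i ∈ Finset.range k, μ ^ i * l ^ (k - 1 - i)‖
        ≤ ∑ i ∈ Finset.range k, ‖μ ^ i * l ^ (k - 1 - i)‖ := norm_sum_le _ _
      _ ≤ ∑ i ∈ Finset.range k, (‖l‖ + 1) ^ k := by
          apply Finset.sum_le_sum
          intro i hi
          rw [norm_mul, norm_pow, norm_pow]
          calc ‖μ‖ ^ i * ‖l‖ ^ (k - 1 - i)
              ≤ (‖l‖ + 1) ^ i * (‖l‖ + 1) ^ (k - 1 - i) := by
                apply mul_le_mul (pow_le_pow_left₀ (norm_nonneg μ) hμ i)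
                  (pow_le_pow_left₀ (norm_nonneg l) hl _) (by positivity) (by positivity)
            _ = (‖l‖ + 1) ^ (i + (k - 1 - i)) := (pow_add _ _ _).symm
            _ ≤ (‖l‖ + 1) ^ k := by
                apply pow_le_pow_right₀ hb1
                have := Finset.mem_range.mp hi
                omega
      _ = (k : ℝ) * (‖l‖ + 1) ^ k := by
          rw [Finset.sum_const, Finset.card_range, nsmul_eq_mul]
  calc ‖∑ i ∈ Finset.range k, μ ^ i * l ^ (k - 1 - i)‖ * ‖μ - l‖
      ≤ ((k : ℝ) * (‖l‖ + 1) ^ k) * ‖μ - l‖ :=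
        mul_le_mul_of_nonneg_right hs (norm_nonneg _)

lemma perturb {E : Type*} [NormedAddCommGroup E] [NormedSpace ℂ E] [CompleteSpace E]
    (T0 : E →ₗ.[ℂ] E) (M : ℕ) (A : Fin M → E →L[ℂ] E) (l μ : ℂ) (R : E →L[ℂ] E)
    (hR1 : ∀ y : E, ∃ h : R y ∈ T0.domain,
      T0 ⟨R y, h⟩ + ∑ j : Fin M, l ^ ((j : ℕ) + 1) • A j (R y) = y)
    (hR2 : ∀ x : T0.domain,
      R (T0 x + ∑ j : Fin M, l ^ ((j : ℕ) + 1) • A j (x : E)) = (x : E))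
    (hD : ‖((∑ j : Fin M, (μ ^ ((j : ℕ) + 1) - l ^ ((j : ℕ) + 1)) • A j).comp R)‖ ≤ 1/2) :
    ∃ R' : E →L[ℂ] E, ‖R'‖ ≤ 2 * ‖R‖ ∧
      (∀ y : E, ∃ h : R' y ∈ T0.domain,
        T0 ⟨R' y, h⟩ + ∑ j : Fin M, μ ^ ((j : ℕ) + 1) • A j (R' y) = y) ∧
      (∀ x : T0.domain,
        R' (T0 x + ∑ j : Fin M, μ ^ ((j : ℕ) + 1) • A j (x : E)) = (x : E)) := by
  set D : E →L[ℂ] E := ∑ j : Fin M, (μ ^ ((j : ℕ) + 1) - l ^ ((j : ℕ) + 1)) • A j with hDdef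
  have hDapp : ∀ z : E, D z =
      (∑ j : Fin M, μ ^ ((j : ℕ) + 1) • A j z) - ∑ j : Fin M, l ^ ((j : ℕ) + 1) • A j z := by
    intro z
    simp [hDdef, ContinuousLinearMap.sum_apply, ContinuousLinearMap.smul_apply, sub_smul,
      Finset.sum_sub_distrib]
  set t : E →L[ℂ] E := -(D.comp R) with htdef
  have ht : ‖t‖ ≤ 1/2 := by rwa [htdef, norm_neg]
  obtain ⟨S, hS1, hS2, hSnorm⟩ := geom_inv t ht
  have h1t : ∀ z : E, (1 - t) z = z + D (R z) := by
    intro z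
    simp [htdef, ContinuousLinearMap.sub_apply, ContinuousLinearMap.neg_apply,
      ContinuousLinearMap.comp_apply, sub_neg_eq_add]
  refine ⟨R.comp S, ?_, ?_, ?_⟩
  · calc ‖R.comp S‖ ≤ ‖R‖ * ‖S‖ := R.opNorm_comp_le S
      _ ≤ ‖R‖ * 2 := mul_le_mul_of_nonneg_left hSnorm (norm_nonneg R)
      _ = 2 * ‖R‖ := by ring
  · intro y
    obtain ⟨h, heq⟩ := hR1 (S y)
    refine ⟨h, ?_⟩
    have hT : T0 ⟨R (S y), h⟩ = S y - ∑ j : Fin M, l ^ ((j : ℕ) + 1) • A j (R (S y)) := by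
      rw [eq_sub_iff_add_eq]; exact heq
    have key : S y + D (R (S y)) = y := by
      have := congrArg (fun f : E →L[ℂ] E => f y) hS1
      simpa [ContinuousLinearMap.mul_apply, h1t (S y)] using this
    show T0 ⟨R (S y), h⟩ + ∑ j : Fin M, μ ^ ((j : ℕ) + 1) • A j (R (S y)) = y
    rw [hT]
    calc S y - (∑ j : Fin M, l ^ ((j : ℕ) + 1) • A j (R (S y)))
          + ∑ j : Fin M, μ ^ ((j : ℕ) + 1) • A j (R (S y))
        = S y + ((∑ j : Fin M, μ ^ ((j : ℕ) + 1) • A j (R (S y)))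
            - ∑ j : Fin M, l ^ ((j : ℕ) + 1) • A j (R (S y))) := by abel
      _ = S y + D (R (S y)) := by rw [hDapp]
      _ = y := key
  · intro x
    set y := T0 x + ∑ j : Fin M, l ^ ((j : ℕ) + 1) • A j (x : E) with hy
    have hRy : R y = (x : E) := hR2 x
    have hsplit : T0 x + ∑ j : Fin M, μ ^ ((j : ℕ) + 1) • A j (x : E) = (1 - t) y := by
      rw [h1t y, hRy, hDapp, hy]
      abel
    have hSy : S ((1 - t) y) = y := by
      have := congrArg (fun f : E →L[ℂ] E => f y) hS2
      simpa [ContinuousLinearMap.mul_apply] using this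
    show R (S (T0 x + ∑ j : Fin M, μ ^ ((j : ℕ) + 1) • A j (x : E))) = (x : E)
    rw [hsplit, hSy, hRy]

/-- Consider polynomial operator pencils
`Tₙ(λ) = A_{0,n} + Σ_{j=1}^M λ^j A_{j,n}` in Hilbert spaces `Hₙ`, with `A_{0,n}` closed and
densely defined and the higher-order coefficients bounded uniformly in `n`.  If `λ` belongs to
the region of boundedness, i.e. `Tₙ(λ)` is boundedly invertible for `n ≥ n₀` with
`‖Tₙ(λ)⁻¹‖ ≤ m`, then there are `r > 0` and `m'` such that, for every `μ` in the disk
`B_r(λ)` and every `n ≥ n₀`, `Tₙ(μ)` is boundedly invertible with `‖Tₙ(μ)⁻¹‖ ≤ m'`. -/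
theorem stmt_12 (M : ℕ) (Hn : ℕ → Type*)
    [∀ n, NormedAddCommGroup (Hn n)] [∀ n, InnerProductSpace ℂ (Hn n)]
    [∀ n, CompleteSpace (Hn n)]
    (A0 : ∀ n, Hn n →ₗ.[ℂ] Hn n)
    (hA0closed : ∀ n, IsClosed ((A0 n).graph : Set (Hn n × Hn n)))
    (hA0dense : ∀ n, Dense ((A0 n).domain : Set (Hn n)))
    (A : ∀ n, Fin M → (Hn n →L[ℂ] Hn n))
    (K : ℝ) (hK : ∀ n j, ‖A n j‖ ≤ K)
    (l : ℂ) (n₀ : ℕ) (m : ℝ)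
    (hres : ∀ n ≥ n₀, ∃ R : Hn n →L[ℂ] Hn n, ‖R‖ ≤ m ∧
      (∀ y : Hn n, ∃ h : R y ∈ (A0 n).domain,
        (A0 n) ⟨R y, h⟩ + ∑ j : Fin M, l ^ ((j : ℕ) + 1) • A n j (R y) = y) ∧
      (∀ x : (A0 n).domain,
        R ((A0 n) x + ∑ j : Fin M, l ^ ((j : ℕ) + 1) • A n j (x : Hn n)) = (x : Hn n))) :
    ∃ r > (0 : ℝ), ∃ m' : ℝ, ∀ μ ∈ Metric.ball l r, ∀ n ≥ n₀,
      ∃ R : Hn n →L[ℂ] Hn n, ‖R‖ ≤ m' ∧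
        (∀ y : Hn n, ∃ h : R y ∈ (A0 n).domain,
          (A0 n) ⟨R y, h⟩ + ∑ j : Fin M, μ ^ ((j : ℕ) + 1) • A n j (R y) = y) ∧
        (∀ x : (A0 n).domain,
          R ((A0 n) x + ∑ j : Fin M, μ ^ ((j : ℕ) + 1) • A n j (x : Hn n)) = (x : Hn n)) := by
  have hm0 : 0 ≤ m := by
    obtain ⟨R, hR, _⟩ := hres n₀ le_rfl
    exact le_trans (norm_nonneg R) hR
  set K' : ℝ := max K 0 with hK'def
  have hK'0 : 0 ≤ K' := le_max_right _ _
  set b : ℝ := ‖l‖ + 1 with hbdef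
  have hb1 : (1 : ℝ) ≤ b := by simp only [hbdef]; linarith [norm_nonneg l]
  set C : ℝ := (M : ℝ) * ((M : ℝ) * b ^ M * K') with hCdef
  have hC0 : 0 ≤ C := by positivity
  set B : ℝ := C * m with hBdef
  have hB0 : 0 ≤ B := mul_nonneg hC0 hm0
  refine ⟨min 1 (1 / (2 * (B + 1))), by positivity, 2 * m, ?_⟩
  intro μ hμ n hn
  obtain ⟨R, hRnorm, hR1, hR2⟩ := hres n hn
  have hdist : ‖μ - l‖ < min 1 (1 / (2 * (B + 1))) := by
    rwa [Metric.mem_ball, dist_eq_norm] at hμ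
  have hd1 : ‖μ - l‖ ≤ 1 := le_of_lt (lt_of_lt_of_le hdist (min_le_left _ _))
  have hd2 : ‖μ - l‖ ≤ 1 / (2 * (B + 1)) := le_of_lt (lt_of_lt_of_le hdist (min_le_right _ _))
  have hDnorm :
      ‖∑ j : Fin M, (μ ^ ((j : ℕ) + 1) - l ^ ((j : ℕ) + 1)) • A n j‖ ≤ C * ‖μ - l‖ := by
    calc ‖∑ j : Fin M, (μ ^ ((j : ℕ) + 1) - l ^ ((j : ℕ) + 1)) • A n j‖
        ≤ ∑ j : Fin M, ‖(μ ^ ((j : ℕ) + 1) - l ^ ((j : ℕ) + 1)) • A n j‖ := norm_sum_le _ _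
      _ ≤ ∑ j : Fin M, ((M : ℝ) * b ^ M * ‖μ - l‖) * K' := by
          apply Finset.sum_le_sum
          intro j _
          rw [norm_smul]
          have h1 : ‖μ ^ ((j : ℕ) + 1) - l ^ ((j : ℕ) + 1)‖ ≤ (M : ℝ) * b ^ M * ‖μ - l‖ := by
            calc ‖μ ^ ((j : ℕ) + 1) - l ^ ((j : ℕ) + 1)‖
                ≤ (((j : ℕ) + 1 : ℕ) : ℝ) * b ^ ((j : ℕ) + 1) * ‖μ - l‖ :=
                  pow_sub_pow_bound μ l ((j : ℕ) + 1) hd1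
              _ ≤ (M : ℝ) * b ^ M * ‖μ - l‖ := by
                  apply mul_le_mul_of_nonneg_right _ (norm_nonneg _)
                  apply mul_le_mul _ (pow_le_pow_right₀ hb1 j.2) (by positivity)
                    (Nat.cast_nonneg M)
                  exact_mod_cast Nat.cast_le.mpr j.2
          have h2 : ‖A n j‖ ≤ K' := le_trans (hK n j) (le_max_left _ _)
          exact mul_le_mul h1 h2 (norm_nonneg _) (by positivity)
      _ = C * ‖μ - l‖ := by
          rw [Finset.sum_const, Finset.card_univ, Fintype.card_fin, nsmul_eq_mul, hCdef]
          ring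
  have hDcomp :
      ‖((∑ j : Fin M, (μ ^ ((j : ℕ) + 1) - l ^ ((j : ℕ) + 1)) • A n j).comp R)‖ ≤ 1/2 := by
    calc ‖((∑ j : Fin M, (μ ^ ((j : ℕ) + 1) - l ^ ((j : ℕ) + 1)) • A n j).comp R)‖
        ≤ ‖∑ j : Fin M, (μ ^ ((j : ℕ) + 1) - l ^ ((j : ℕ) + 1)) • A n j‖ * ‖R‖ :=
          ContinuousLinearMap.opNorm_comp_le _ _
      _ ≤ (C * ‖μ - l‖) * m :=
          mul_le_mul hDnorm hRnorm (norm_nonneg _)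
            (mul_nonneg hC0 (norm_nonneg _))
      _ = B * ‖μ - l‖ := by rw [hBdef]; ring
      _ ≤ 1/2 := by
          have h := mul_le_mul_of_nonneg_left hd2 hB0
          have hpos : (0 : ℝ) < 2 * (B + 1) := by linarith
          have h2 : B / (2 * (B + 1)) ≤ 1/2 := by
            rw [div_le_iff₀ hpos]; nlinarith
          rw [mul_one_div] at h
          linarith
  obtain ⟨R', hR'norm, p1, p2⟩ := perturb (A0 n) M (A n) l μ R hR1 hR2 hDcomp
  exact ⟨R', by linarith, p1, p2⟩
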